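/- Let 0 < m < n < 2m with gcd(m, n) = 1, and let S ⊆ Σ^m ∪ Σ^n. Then S* is co-finite if and only if Σ^m ⊆ S and Σ^l ⊆ S*, where l = m·|Σ|^{n−m} + (n−m). -/

import Mathlib

open Computability

variable {α : Type}

theorem CofTL.kstar_append {S : Language α} {x y : List α} (hx : x ∈ S∗) (hy : y ∈ S∗) :
    x ++ y ∈ S∗ := by
  rw [Language.mem_kstar] at *
  obtain ⟨L1, rfl, h1⟩ := hx
  obtain ⟨L2, rfl, h2⟩ := hy
  refine ⟨L1 ++ L2, by simp, ?_⟩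
  intro y hy
  rcases List.mem_append.mp hy with h|h
  exacts [h1 _ h, h2 _ h]

theorem CofTL.mem_kstar_of_mem {S : Language α} {x : List α} (h : x ∈ S) : x ∈ S∗ := by
  rw [Language.mem_kstar]; exact ⟨[x], by simp, by simpa using h⟩

theorem CofTL.blocks {S : Language α} {d : ℕ}
    (H : ∀ w : List α, w.length = d → w ∈ S∗) :
    ∀ u : List α, d ∣ u.length → u ∈ S∗ := by
  intro u hu
  obtain ⟨k, hk⟩ := hu
  induction k generalizing u with
  | zero => simp at hk; subst hk; exact Language.nil_mem_kstar S
  | succ k ih =>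
      have hk' : u.length = d * k + d := by rw [hk]; ring
      have h1 : u = u.take d ++ u.drop d := (List.take_append_drop d u).symm
      rw [h1]
      refine CofTL.kstar_append (H _ ?_) (ih _ ?_)
      · simp; omega
      · simp; omega

theorem CofTL.first_n_piece {m : ℕ} (ws : List (List α)) :
    (∀ w ∈ ws, w.length = m) ∨
    ∃ P v Q, ws = P ++ v :: Q ∧ (∀ p ∈ P, p.length = m) ∧ v.length ≠ m := by
  induction ws with
  | nil => left; simp
  | cons w ws ih =>
      by_cases hw : w.length = m
      · rcases ih with h | ⟨P, v, Q, rfl, hP, hv⟩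
        · left
          intro x hx
          rcases List.mem_cons.mp hx with rfl|h'
          exacts [hw, h x h']
        · right
          refine ⟨w :: P, v, Q, by simp, ?_, hv⟩
          intro p hp
          rcases List.mem_cons.mp hp with rfl|h'
          exacts [hw, hP p h']
      · right; exact ⟨[], w, ws, by simp, by simp, hw⟩

theorem CofTL.join_length_of_m {m : ℕ} (P : List (List α)) (hP : ∀ p ∈ P, p.length = m) :
    P.flatten.length = m * P.length := by
  induction P with
  | nil => simp
  | cons p P ih =>
      simp only [List.flatten_cons, List.length_append, List.length_cons,
        hP p (by simp), ih (fun q hq => hP q (by simp [hq]))]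
      ring

theorem CofTL.window_eq {X Y : List α} {N p n : ℕ} (h : X.take N = Y.take N)
    (hpn : p + n ≤ N) : (X.drop p).take n = (Y.drop p).take n := by
  have hx : (X.drop p).take n = ((X.take N).drop p).take n := by
    rw [List.drop_take, List.take_take, Nat.min_eq_left (by omega)]
  have hy : (Y.drop p).take n = ((Y.take N).drop p).take n := by
    rw [List.drop_take, List.take_take, Nat.min_eq_left (by omega)]
  rw [hx, hy, h]

/-- **Pump-down lemma.** -/
theorem CofTL.lemmaP {S : Language α} {m n : ℕ} (hm : 0 < m) (hmn : m < n) (hn2m : n < 2 * m)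
    (hS : ∀ w ∈ S, w.length = m ∨ w.length = n)
    (Hm : ∀ w : List α, w.length = m → w ∈ S)
    (A B C : List α) (hA : m ∣ A.length) (hB : m ∣ B.length) (hBpos : B.length ≠ 0)
    (q : ℕ) (hC : C.length = q * m + (n - m))
    (hpre : B.take (n - m) = C.take (n - m))
    (T : ℕ) (hT : 1 ≤ T)
    (hX : A ++ (List.replicate (T + 1) B).flatten ++ C ∈ S∗) :
    A ++ (List.replicate T B).flatten ++ C ∈ S∗ := by
  set r := n - m with hr
  have hrpos : 0 < r := by omega
  have hrm : r < m := by omega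
  have hnmr : n = m + r := by omega
  set X := A ++ (List.replicate (T + 1) B).flatten ++ C with hXdef
  set Y := A ++ (List.replicate T B).flatten ++ C with hYdef
  have hrep : ∀ k : ℕ, (List.replicate k B).flatten.length = k * B.length := by
    intro k; simp [List.length_flatten]
  have hXlen : X.length = A.length + (T + 1) * B.length + C.length := by
    simp [hXdef, hrep]; ring
  have hYlen : Y.length = A.length + T * B.length + C.length := by
    simp [hYdef, hrep]; ring
  have hTT : (T + 1) * B.length = T * B.length + B.length := by ring
  set β := A.length + T * B.length with hβ
  have hβdvd : m ∣ β := Nat.dvd_add hA (Dvd.dvd.mul_left hB T)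
  have hrB : r ≤ B.length := by
    have := Nat.le_of_dvd (by omega) hB
    omega
  have hXY : X.take (β + r) = Y.take (β + r) := by
    have hD : X = (A ++ (List.replicate T B).flatten) ++ (B ++ C) := by
      rw [hXdef, List.replicate_succ', List.flatten_append]
      simp [List.append_assoc]
    have hD' : Y = (A ++ (List.replicate T B).flatten) ++ C := by
      rw [hYdef, List.append_assoc]
    have hlenD : (A ++ (List.replicate T B).flatten).length = β := by
      simp [hrep, hβ]
    rw [hD, hD', ← hlenD, List.take_length_add_append, List.take_length_add_append,
      List.take_append_of_le_length hrB, hpre]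
  rw [Language.mem_kstar] at hX
  obtain ⟨ws, hwsX, hwsS⟩ := hX
  rcases CofTL.first_n_piece (m := m) ws with hall | ⟨P, v, Q, rfl, hP, hv⟩
  · exfalso
    have h1 : m ∣ X.length := by
      rw [hwsX, CofTL.join_length_of_m ws hall]
      exact Dvd.intro _ rfl
    have h2 : m ∣ r := by
      have hXl : X.length = A.length + (T + 1) * B.length + (q * m + r) := by rw [hXlen, hC]
      have hd : m ∣ A.length + (T + 1) * B.length + q * m :=
        Nat.dvd_add (Nat.dvd_add hA (Dvd.dvd.mul_left hB (T + 1))) (Dvd.intro_left q rfl)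
      have h3 := Nat.dvd_sub h1 hd
      have heq : X.length - (A.length + (T + 1) * B.length + q * m) = r := by omega
      rwa [heq] at h3
    exact absurd (Nat.le_of_dvd hrpos h2) (by omega)
  · have hvS : v ∈ S := hwsS v (by simp)
    have hvn : v.length = n := (hS v hvS).resolve_left hv
    set p := P.flatten.length with hp
    have hpdvd : m ∣ p := by rw [hp, CofTL.join_length_of_m P hP]; exact Dvd.intro _ rfl
    have hXsplit : X = P.flatten ++ (v :: Q).flatten := by
      rw [hwsX, List.flatten_append]
    have hXdropp : X.drop p = (v :: Q).flatten := by
      rw [hXsplit, hp, List.drop_left]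
    have hpn : p + n ≤ X.length := by
      have h4 : X.length = p + (v :: Q).flatten.length := by rw [hXsplit]; simp [hp]
      have h2 : n ≤ (v :: Q).flatten.length := by
        simp [List.flatten_cons, ← hvn]
      omega
    have hmS : ∀ w : List α, w.length = m → w ∈ S∗ := fun w hw =>
      CofTL.mem_kstar_of_mem (Hm w hw)
    by_cases hcase : p + n ≤ β + r
    · have hpmβ : p + m ≤ β := by omega
      have hYlen' : Y.length = β + q * m + r := by rw [hYlen, hC]; omega
      have hpnY : p + n ≤ Y.length := by omega
      have hYsplit : Y = Y.take p ++ ((Y.drop p).take n ++ Y.drop (p + n)) := by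
        rw [← List.drop_drop]
        rw [List.take_append_drop, List.take_append_drop]
      rw [hYsplit]
      refine CofTL.kstar_append (CofTL.blocks hmS _ ?_)
        (CofTL.kstar_append ?_ (CofTL.blocks hmS _ ?_))
      · simp only [List.length_take]
        rw [Nat.min_eq_left (by omega)]
        exact hpdvd
      · have h1 : (Y.drop p).take n = (X.drop p).take n := (CofTL.window_eq hXY hcase).symm
        have h2 : (X.drop p).take n = v := by
          rw [hXdropp, List.flatten_cons, ← hvn, List.take_left]
        rw [h1, h2]
        exact CofTL.mem_kstar_of_mem hvS
      · simp only [List.length_drop]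
        have heq : Y.length - (p + n) = (β - (p + m)) + q * m := by omega
        rw [heq]
        exact Nat.dvd_add (Nat.dvd_sub hβdvd (Nat.dvd_add hpdvd dvd_rfl)) (Dvd.intro_left q rfl)
    · have hpβ : β ≤ p := by
        by_contra hlt
        push_neg at hlt
        have h1 : m ≤ β - p := Nat.le_of_dvd (by omega) (Nat.dvd_sub hβdvd hpdvd)
        omega
      have hABβ : A.length + B.length ≤ β := by
        have : B.length ≤ T * B.length := Nat.le_mul_of_pos_left _ (by omega)
        omega
      set W := (List.replicate T B).flatten ++ C with hW
      have hXW : X = (A ++ B) ++ W := by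
        rw [hXdef, hW, List.replicate_succ, List.flatten_cons]
        simp [List.append_assoc]
      have hYW : Y = A ++ W := by rw [hYdef, hW, List.append_assoc]
      have hdropX : X.drop p = W.drop (p - (A.length + B.length)) := by
        rw [hXW, List.drop_append]
        rw [List.drop_eq_nil_of_le (by simp only [List.length_append]; omega)]
        simp only [List.nil_append, List.length_append]
      have hdropY : Y.drop (p - B.length) = W.drop (p - B.length - A.length) := by
        rw [hYW, List.drop_append]
        rw [List.drop_eq_nil_of_le (by omega)]
        simp only [List.nil_append]
      have hdropXY : X.drop p = Y.drop (p - B.length) := by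
        rw [hdropX, hdropY]
        congr 1
        omega
      have hsuffix : Y.drop (p - B.length) ∈ S∗ := by
        rw [← hdropXY, hXdropp]
        exact Language.join_mem_kstar (fun y hy => hwsS y (by simp at hy ⊢; tauto))
      have hYsplit : Y = Y.take (p - B.length) ++ Y.drop (p - B.length) :=
        (List.take_append_drop _ Y).symm
      rw [hYsplit]
      refine CofTL.kstar_append (CofTL.blocks hmS _ ?_) hsuffix
      simp only [List.length_take]
      have hpY : p - B.length ≤ Y.length := by omega
      rw [Nat.min_eq_left hpY]
      exact Nat.dvd_sub hpdvd hB

/-- If `0 < m < n < 2m` and `gcd(m,n) = 1`, and `S ⊆ Σ^m ∪ Σ^n`, then `S∗`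
is co-finite iff `Σ^m ⊆ S` and `Σ^l ⊆ S∗`, where `l = m·|Σ|^{n−m} + (n−m)`. -/
theorem cofinite_iff_two_lengths {α : Type} [Fintype α] (m n : ℕ)
    (hm : 0 < m) (hmn : m < n) (hn2m : n < 2 * m) (hgcd : Nat.gcd m n = 1)
    (S : Language α) (hS : ∀ w ∈ S, w.length = m ∨ w.length = n)
    (l : ℕ) (hl : l = m * Fintype.card α ^ (n - m) + (n - m)) :
    Set.Finite ((S∗ : Language α)ᶜ) ↔
      ((∀ w : List α, w.length = m → w ∈ S) ∧ (∀ w : List α, w.length = l → w ∈ S∗)) := by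
  set r := n - m with hr
  have hrpos : 0 < r := by omega
  have hrm : r < m := by omega
  set c := Fintype.card α with hc
  have hlpos : 0 < l := by rw [hl]; omega
  constructor
  · -- forward direction
    intro hfin
    -- bound on lengths of missing words
    obtain ⟨N, hN⟩ : ∃ N, ∀ w : List α, w ∉ S∗ → w.length ≤ N := by
      obtain ⟨N, hN⟩ := (hfin.image List.length).bddAbove
      exact ⟨N, fun w hw => hN ⟨w, hw, rfl⟩⟩
    have hlong : ∀ w : List α, N < w.length → w ∈ S∗ := by
      intro w hw
      by_contra h
      exact absurd (hN w h) (by omega)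
    -- part 1 : Σ^m ⊆ S
    have Hm : ∀ w : List α, w.length = m → w ∈ S := by
      intro w hwm
      by_contra hw
      set s := w.take r with hs
      set X : ℕ → List α := fun k => (List.replicate k (w ++ s)).flatten ++ w with hXdef
      have hslen : s.length = r := by
        rw [hs, List.length_take, hwm]; omega
      have hXlen : ∀ k, (X k).length = k * (m + r) + m := by
        intro k
        simp [hXdef, List.length_flatten, hwm, hslen]
        try ring
      have hXsucc : ∀ k, X (k + 1) = (w ++ s) ++ X k := by
        intro k
        simp [hXdef, List.replicate_succ, List.append_assoc]
      have hclaim : ∀ k, X k ∉ S∗ := by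
        intro k
        induction k with
        | zero =>
            intro hmem
            rw [Language.mem_kstar] at hmem
            obtain ⟨ws, hws, hwsS⟩ := hmem
            have hX0 : X 0 = w := by simp [hXdef]
            rw [hX0] at hws
            rcases ws with _ | ⟨v, rest⟩
            · simp at hws
              rw [hws] at hwm
              simp at hwm
              omega
            · simp only [List.flatten_cons] at hws
              have hvS : v ∈ S := hwsS v (by simp)
              rcases hS v hvS with hvm | hvn
              · have hvw : v = w := by
                  have h1 : w.take v.length = v := by rw [hws, List.take_left]
                  rw [← h1, hvm, ← hwm, List.take_length]
                exact hw (hvw ▸ hvS)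
              · have := congrArg List.length hws
                simp [hwm, hvn] at this
                omega
        | succ k ih =>
            intro hmem
            rw [Language.mem_kstar] at hmem
            obtain ⟨ws, hws, hwsS⟩ := hmem
            rcases ws with _ | ⟨v, rest⟩
            · have : (X (k+1)).length = 0 := by rw [hws]; simp
              rw [hXlen] at this
              omega
            · simp only [List.flatten_cons] at hws
              rw [hXsucc] at hws
              have hvS : v ∈ S := hwsS v (by simp)
              have hwslen : (w ++ s).length = n := by
                simp [hwm, hslen]; omega
              rcases hS v hvS with hvm | hvn
              · have hveq : v = w := by
                  have h1 : (w ++ s ++ X k).take v.length = v := by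
                    rw [hws, List.take_left]
                  have h2 : (w ++ s ++ X k).take m = w := by
                    rw [List.append_assoc, List.take_append_of_le_length (by omega)]
                    rw [← hwm, List.take_length]
                  rw [← h1, hvm, h2]
                exact hw (hveq ▸ hvS)
              · have hrest : rest.flatten = X k := by
                  have h1 : (w ++ s ++ X k).drop v.length = rest.flatten := by
                    rw [hws, List.drop_left]
                  rw [← h1, hvn, ← hwslen, List.drop_left]
                exact ih (hrest ▸ Language.join_mem_kstar
                  (fun y hy => hwsS y (by simp [hy])))
      have hbig : N < (X (N + 1)).length := by
        rw [hXlen]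
        have : N + 1 ≤ (N+1) * (m + r) := Nat.le_mul_of_pos_right _ (by omega)
        omega
      exact hclaim (N + 1) (hlong _ hbig)
    refine ⟨Hm, ?_⟩
    -- part 2 : Σ^l ⊆ S∗
    intro x hxl
    by_contra hx
    -- pigeonhole on boundary words
    have hbound : ∀ i : ℕ, i ≤ c ^ r → i * m + r ≤ l := by
      intro i hi
      have : i * m ≤ c ^ r * m := Nat.mul_le_mul_right _ hi
      have h2 : m * c ^ r = c ^ r * m := mul_comm _ _
      omega
    set f : Fin (c ^ r + 1) → List.Vector α r := fun i =>
      ⟨(x.drop (i.val * m)).take r, by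
        simp only [List.length_take, List.length_drop, hxl]
        have := hbound i.val (by omega)
        omega⟩ with hf
    obtain ⟨i0, j0, hne, heq0⟩ := Fintype.exists_ne_map_eq_of_card_lt f
      (by simp [card_vector, hc])
    obtain ⟨i, j, hij, heq⟩ : ∃ i j : Fin (c ^ r + 1), i < j ∧ f i = f j := by
      rcases hne.lt_or_gt with h | h
      exacts [⟨i0, j0, h, heq0⟩, ⟨j0, i0, h, heq0.symm⟩]
    have heqL : (x.drop (i.val * m)).take r = (x.drop (j.val * m)).take r := by
      have := congrArg List.Vector.toList heq
      simpa [hf] using this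
    set ii := i.val with hii
    set jj := j.val with hjj
    have hiijj : ii < jj := hij
    have hjjle : jj ≤ c ^ r := by omega
    have hjml : jj * m ≤ l := by have := hbound jj hjjle; omega
    have himl : ii * m ≤ l := by have := hbound ii (by omega); omega
    set A := x.take (ii * m) with hA
    set B := (x.take (jj * m)).drop (ii * m) with hB
    set C := x.drop (jj * m) with hC
    have hxsplit : x = A ++ B ++ C := by
      rw [hA, hB, hC]
      have h1 : x.take (ii * m) = (x.take (jj * m)).take (ii * m) := by
        rw [List.take_take, Nat.min_eq_left (Nat.mul_le_mul_right _ (le_of_lt hiijj))]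
      rw [h1, List.take_append_drop, List.take_append_drop]
    have hAlen : A.length = ii * m := by simp [hA, hxl]; omega
    have hBlen : B.length = jj * m - ii * m := by simp [hB, hxl]; omega
    have hClen : C.length = (c ^ r - jj) * m + r := by
      simp only [hC, List.length_drop, hxl, hl]
      have h2 : (c ^ r - jj) * m = c ^ r * m - jj * m := Nat.sub_mul _ _ _
      have h3 : m * c ^ r = c ^ r * m := mul_comm _ _
      have h4 : jj * m ≤ c ^ r * m := Nat.mul_le_mul_right _ hjjle
      omega
    have hAdvd : m ∣ A.length := by rw [hAlen]; exact Dvd.intro_left _ rfl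
    have hBdvd : m ∣ B.length := by
      rw [hBlen]; exact Nat.dvd_sub (Dvd.intro_left _ rfl) (Dvd.intro_left _ rfl)
    have hBpos : B.length ≠ 0 := by
      rw [hBlen]
      have : ii * m < jj * m := (Nat.mul_lt_mul_right (by omega : 0 < m)).mpr hiijj
      omega
    have hpre : B.take r = C.take r := by
      have h1 : B.take r = (x.drop (ii * m)).take r := by
        rw [hB, List.drop_take, List.take_take]
        congr 1
        have h2 : m ≤ jj * m - ii * m := by
          have : (ii+1) * m ≤ jj * m := Nat.mul_le_mul_right _ (by omega)
          have h3 : (ii+1) * m = ii * m + m := by ring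
          omega
        omega
      rw [h1, hC, heqL]
    -- the pumping family
    have hdesc : ∀ T : ℕ, 1 ≤ T →
        A ++ (List.replicate T B).flatten ++ C ∈ S∗ → x ∈ S∗ := by
      intro T
      induction T with
      | zero => omega
      | succ T ihT =>
          intro _ hmem
          rcases Nat.eq_zero_or_pos T with rfl | hTpos
          · simpa [hxsplit] using hmem
          · exact ihT (by omega)
              (CofTL.lemmaP hm hmn hn2m hS Hm A B C hAdvd hBdvd hBpos _ hClen hpre T hTpos hmem)
    -- contradiction with cofiniteness
    set T0 := N + 1 with hT0
    have hbig : N < (A ++ (List.replicate T0 B).flatten ++ C).length := by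
      simp only [List.length_append, List.length_flatten]
      have h1 : (List.replicate T0 B).flatten.length = T0 * B.length := by
        simp [List.length_flatten]
      have h2 : T0 ≤ T0 * B.length := Nat.le_mul_of_pos_right _ (by omega)
      simp only [List.length_flatten] at h1
      omega
    exact hx (hdesc T0 (by omega) (hlong _ hbig))
  · -- reverse direction
    rintro ⟨Hm, Hl⟩
    have hcop : Nat.Coprime m l := by
      have h1 : Nat.Coprime m (m + r) := by
        have : n = m + r := by omega
        rw [← this]; exact hgcd
      have h2 : Nat.Coprime m r := by simpa using h1
      have h3 : Nat.Coprime m (r + m * (c ^ r)) := by simpa using h2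
      rw [hl]
      have : m * c ^ r + r = r + m * c ^ r := by ring
      rw [this]
      exact h3
    haveI : NeZero m := ⟨by omega⟩
    apply Set.Finite.subset (List.finite_length_lt α (m * l))
    intro w hw
    simp only [Set.mem_setOf_eq]
    by_contra hlen
    push_neg at hlen
    apply hw
    -- w.length ≥ m * l, split into m-blocks and l-blocks
    set L := w.length with hL
    obtain ⟨b, hbm, hbeq⟩ : ∃ b, b < m ∧ (L : ZMod m) = ((b * l : ℕ) : ZMod m) := by
      refine ⟨((L : ZMod m) * (l : ZMod m)⁻¹).val, ZMod.val_lt _, ?_⟩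
      push_cast
      rw [ZMod.natCast_val, ZMod.cast_id]
      rw [mul_assoc, ZMod.inv_mul_of_unit]
      · ring
      · exact (ZMod.isUnit_iff_coprime l m).mpr hcop.symm
    have hble : b * l ≤ L := by
      have h1 : b * l ≤ (m - 1) * l := Nat.mul_le_mul_right _ (by omega)
      have h2 : (m - 1) * l = m * l - l := by rw [Nat.sub_mul, one_mul]
      omega
    have hdvd : m ∣ L - b * l := by
      have h1 : ((L - b * l : ℕ) : ZMod m) = 0 := by
        rw [Nat.cast_sub hble, hbeq]
        ring
      exact (ZMod.natCast_eq_zero_iff _ _).mp h1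
    have hsplit : w = w.take (L - b * l) ++ w.drop (L - b * l) :=
      (List.take_append_drop _ w).symm
    rw [hsplit]
    refine CofTL.kstar_append (CofTL.blocks (d := m) ?_ _ ?_) (CofTL.blocks Hl _ ?_)
    · exact fun u hu => CofTL.mem_kstar_of_mem (Hm u hu)
    · simp only [List.length_take]
      rw [Nat.min_eq_left (by omega)]
      exact hdvd
    · simp only [List.length_drop]
      have : L - (L - b * l) = b * l := by omega
      rw [this]
      exact Dvd.intro_left _ rfl
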